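/- Let a < c be reals and let x : [a,c] → [0,1] and p : [a,c] → ℝ satisfy: (BIC) for all s, s' ∈ [a,c], p(s) − s·x(s) ≥ p(s') − s·x(s'), and (IR) for all s ∈ [a,c], p(s) − s·x(s) ≥ 0. Then x is nonincreasing on [a,c], and there exists a constant η ≥ 0 (namely η = p(c) − c·x(c)) such that for every s ∈ [a,c], p(s) = s·x(s) + ∫_s^c x(t) dt + η. -/

import Mathlib

open Set intervalIntegral

/-- seller-side payment identity: if the interim allocation `x` (taking
values in `[0,1]`) and interim gain `p` of a single-dimensional seller with cost space
`[a,c]` satisfy BIC and IR, then `x` is nonincreasing on `[a,c]` and, with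
`η = p(c) − c·x(c) ≥ 0`, for every `s ∈ [a,c]` we have
`p(s) = s·x(s) + ∫_s^c x(t) dt + η`. -/
theorem stmt_15 (a c : ℝ) (hac : a < c) (x p : ℝ → ℝ)
    (hx01 : ∀ s ∈ Set.Icc a c, x s ∈ Set.Icc (0 : ℝ) 1)
    (hBIC : ∀ s ∈ Set.Icc a c, ∀ s' ∈ Set.Icc a c, p s' - s * x s' ≤ p s - s * x s)
    (hIR : ∀ s ∈ Set.Icc a c, 0 ≤ p s - s * x s) :
    AntitoneOn x (Set.Icc a c) ∧
    0 ≤ p c - c * x c ∧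
    ∀ s ∈ Set.Icc a c, p s = s * x s + (∫ t in s..c, x t) + (p c - c * x c) := by
  set u : ℝ → ℝ := fun t => p t - t * x t with hu
  have key : ∀ s ∈ Set.Icc a c, ∀ s' ∈ Set.Icc a c, (s' - s) * x s' ≤ u s - u s' := by
    intro s hs s' hs'
    have h := hBIC s hs s' hs'
    simp only [hu]
    nlinarith [h]
  have hanti : AntitoneOn x (Set.Icc a c) := by
    intro s hs s' hs' hss'
    rcases eq_or_lt_of_le hss' with h | h
    · rw [h]
    · have h1 := key s hs s' hs'
      have h2 := key s' hs' s hs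
      nlinarith [sub_pos.mpr h]
  have hint : ∀ s ∈ Set.Icc a c, ∀ t ∈ Set.Icc a c,
      IntervalIntegrable x MeasureTheory.volume s t := by
    intro s hs t ht
    exact (hanti.mono (uIcc_subset_Icc hs ht)).intervalIntegrable
  have hbound : ∀ s ∈ Set.Icc a c, ∀ t ∈ Set.Icc a c, s ≤ t →
      (t - s) * x t ≤ (∫ r in s..t, x r) ∧ (∫ r in s..t, x r) ≤ (t - s) * x s := by
    intro s hs t ht hst
    have hsub : Set.Icc s t ⊆ Set.Icc a c := Set.Icc_subset_Icc hs.1 ht.2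
    constructor
    · have := intervalIntegral.integral_mono_on hst
        (_root_.intervalIntegrable_const (c := x t)) (hint s hs t ht)
        (fun r hr => hanti (hsub hr) ht hr.2)
      simpa [smul_eq_mul, mul_comm] using this
    · have := intervalIntegral.integral_mono_on hst (hint s hs t ht)
        (_root_.intervalIntegrable_const (c := x s))
        (fun r hr => hanti hs (hsub hr) hr.1)
      simpa [smul_eq_mul, mul_comm] using this
  have main : ∀ s ∈ Set.Icc a c, u s - u c = ∫ t in s..c, x t := by
    intro s hs
    rcases eq_or_lt_of_le hs.2 with rfl | hsc
    · simp
    have hcs : (0:ℝ) < c - s := sub_pos.mpr hsc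
    have hcmem : c ∈ Set.Icc a c := ⟨le_of_lt hac, le_refl c⟩
    have habs : ∀ n : ℕ, 0 < n → |u s - u c - ∫ t in s..c, x t| ≤ (c - s) / n := by
      intro n hn
      set δ : ℝ := (c - s) / n with hδ
      have hδpos : 0 < δ := div_pos hcs (Nat.cast_pos.mpr hn)
      set t : ℕ → ℝ := fun i => s + i * δ with ht
      have htn : t n = c := by
        simp only [ht, hδ]
        field_simp
        ring
      have hmono : ∀ i j : ℕ, i ≤ j → t i ≤ t j := by
        intro i j hij
        simp only [ht]
        have : (i:ℝ) ≤ j := Nat.cast_le.mpr hij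
        nlinarith
      have h0 : t 0 = s := by simp [ht]
      have htmem : ∀ i ≤ n, t i ∈ Set.Icc a c := by
        intro i hi
        constructor
        · have h1 : t 0 ≤ t i := hmono 0 i (Nat.zero_le i)
          rw [h0] at h1
          linarith [hs.1]
        · have := hmono i n hi
          rw [htn] at this; exact this
      have hsum1 : u s - u c = ∑ i ∈ Finset.range n, (u (t i) - u (t (i+1))) := by
        rw [← h0, ← htn]
        exact (Finset.sum_range_sub' (fun i => u (t i)) n).symm
      have hsum2 : (∫ r in s..c, x r) =
          ∑ i ∈ Finset.range n, ∫ r in (t i)..(t (i+1)), x r := by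
        rw [← h0, ← htn]
        exact (intervalIntegral.sum_integral_adjacent_intervals
          (fun k hk => hint (t k) (htmem k (le_of_lt hk)) (t (k+1)) (htmem (k+1) hk))).symm
      have hterm : ∀ i ∈ Finset.range n,
          |(u (t i) - u (t (i+1))) - ∫ r in (t i)..(t (i+1)), x r|
            ≤ δ * (x (t i) - x (t (i+1))) := by
        intro i hi
        have hi' : i < n := Finset.mem_range.mp hi
        have hmi := htmem i (le_of_lt hi')
        have hmi1 := htmem (i+1) hi'
        have hle : t i ≤ t (i+1) := hmono i (i+1) (Nat.le_succ i)
        have hdiff : t (i+1) - t i = δ := by simp only [ht]; push_cast; ring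
        have k1 := key (t i) hmi (t (i+1)) hmi1
        have k2 := key (t (i+1)) hmi1 (t i) hmi
        have b := hbound (t i) hmi (t (i+1)) hmi1 hle
        rw [abs_le]
        constructor <;> nlinarith [b.1, b.2]
      calc |u s - u c - ∫ r in s..c, x r|
          = |∑ i ∈ Finset.range n,
              ((u (t i) - u (t (i+1))) - ∫ r in (t i)..(t (i+1)), x r)| := by
            rw [hsum1, hsum2, ← Finset.sum_sub_distrib]
        _ ≤ ∑ i ∈ Finset.range n,
              |(u (t i) - u (t (i+1))) - ∫ r in (t i)..(t (i+1)), x r| :=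
            Finset.abs_sum_le_sum_abs _ _
        _ ≤ ∑ i ∈ Finset.range n, δ * (x (t i) - x (t (i+1))) :=
            Finset.sum_le_sum hterm
        _ = δ * (x (t 0) - x (t n)) := by
            rw [← Finset.mul_sum, Finset.sum_range_sub' (fun i => x (t i))]
        _ ≤ δ * 1 := by
            have h1 := hx01 s hs
            have h2 := hx01 c hcmem
            rw [h0, htn]
            nlinarith [h1.1, h1.2, h2.1, h2.2]
        _ = (c - s) / n := by rw [mul_one]
    have hA : |u s - u c - ∫ t in s..c, x t| = 0 := by
      by_contra h
      have hApos : 0 < |u s - u c - ∫ t in s..c, x t| :=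
        lt_of_le_of_ne (abs_nonneg _) (Ne.symm h)
      obtain ⟨n, hn⟩ := exists_nat_gt ((c - s) / |u s - u c - ∫ t in s..c, x t|)
      have hnpos : 0 < n := by
        by_contra hn0
        push_neg at hn0
        interval_cases n
        simp at hn
        nlinarith [div_pos hcs hApos]
      have := habs n hnpos
      rw [div_lt_iff₀ hApos] at hn
      have hn' : (c - s) / n < |u s - u c - ∫ t in s..c, x t| := by
        rw [div_lt_iff₀ (Nat.cast_pos.mpr hnpos)]
        linarith [mul_comm (n:ℝ) (|u s - u c - ∫ t in s..c, x t|)]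
      linarith
    have := abs_eq_zero.mp hA
    linarith
  refine ⟨hanti, hIR c ⟨le_of_lt hac, le_refl c⟩, fun s hs => ?_⟩
  have := main s hs
  simp only [hu] at this
  linarith
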